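/- Let v̂, v ∈ ℝ^p with ‖v̂ - v‖² ≤ ε², ‖v‖ = 1, and suppose v is supported on a set Q of size k with |v_i| ≥ θ/√k for all i ∈ Q. Let B = {i : |v̂_i| ≥ θ/(2√k)}. Then the symmetric difference satisfies |B △ Q| ≤ 4ε²k/θ². -/

import Mathlib

open scoped symmDiff

/-- If `‖v̂ - v‖² ≤ ε²`, `‖v‖ = 1`, `v` is supported on `Q` of size `k` with
`|v_i| ≥ θ/√k` on `Q`, and `B = {i : |v̂_i| ≥ θ/(2√k)}`, then
`|B △ Q| ≤ 4ε²k/θ²`. -/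
theorem stmt_6 (p k : ℕ) (hk : 0 < k) (θ ε : ℝ) (hθ : 0 < θ)
    (v vhat : EuclideanSpace ℝ (Fin p)) (hv : ‖v‖ = 1)
    (Q : Finset (Fin p)) (hQcard : Q.card = k)
    (hsupp : ∀ i, i ∉ Q → v i = 0)
    (hlow : ∀ i ∈ Q, θ / Real.sqrt k ≤ |v i|)
    (hclose : ‖vhat - v‖ ^ 2 ≤ ε ^ 2) :
    ((({i : Fin p | θ / (2 * Real.sqrt k) ≤ |vhat i|} ∆ (↑Q : Set (Fin p))).ncard : ℝ)) ≤
      4 * ε ^ 2 * k / θ ^ 2 := by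
  have hks : (0:ℝ) < Real.sqrt k := Real.sqrt_pos.mpr (by exact_mod_cast hk)
  set c : ℝ := θ / (2 * Real.sqrt k) with hc
  have hcpos : 0 < c := div_pos hθ (by positivity)
  set S : Set (Fin p) := {i : Fin p | c ≤ |vhat i|} ∆ (↑Q : Set (Fin p)) with hS
  have hSfin : S.Finite := Set.toFinite _
  set T : Finset (Fin p) := hSfin.toFinset with hT
  have hncard : S.ncard = T.card := Set.ncard_eq_toFinset_card S hSfin
  -- per-element bound
  have key : ∀ i ∈ T, c ^ 2 ≤ (vhat i - v i) ^ 2 := by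
    intro i hi
    have hi' : i ∈ S := by rwa [hT, Set.Finite.mem_toFinset] at hi
    have hc2 : c ≤ |vhat i - v i| := by
      rcases hi' with ⟨hiB, hiQ⟩ | ⟨hiQ, hiB⟩
      · -- i ∈ B, i ∉ Q
        have hv0 : v i = 0 := hsupp i (by simpa using hiQ)
        have : c ≤ |vhat i| := hiB
        simpa [hv0] using this
      · -- i ∈ Q, i ∉ B
        have hvlow : θ / Real.sqrt k ≤ |v i| := hlow i (by simpa using hiQ)
        have hvh : |vhat i| < c := lt_of_not_ge hiB
        have h2c : 2 * c = θ / Real.sqrt k := by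
          field_simp [hc]
          rw [hc]; field_simp [hks.ne']
        have : |v i| - |vhat i| ≤ |vhat i - v i| := by
          have := abs_sub_abs_le_abs_sub (v i) (vhat i)
          rw [abs_sub_comm] at this
          linarith
        linarith
    calc c ^ 2 ≤ |vhat i - v i| ^ 2 := by
          apply pow_le_pow_left₀ hcpos.le hc2
      _ = (vhat i - v i) ^ 2 := sq_abs _
  have hsum : (T.card : ℝ) * c ^ 2 ≤ ∑ i, (vhat i - v i) ^ 2 := by
    calc (T.card : ℝ) * c ^ 2 = ∑ _i ∈ T, c ^ 2 := by
          rw [Finset.sum_const, nsmul_eq_mul]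
      _ ≤ ∑ i ∈ T, (vhat i - v i) ^ 2 := Finset.sum_le_sum key
      _ ≤ ∑ i, (vhat i - v i) ^ 2 := Finset.sum_le_sum_of_subset_of_nonneg
          (Finset.subset_univ T) (fun i _ _ => sq_nonneg _)
  have hnorm : ∑ i, (vhat i - v i) ^ 2 ≤ ε ^ 2 := by
    have := hclose
    rw [EuclideanSpace.norm_eq] at this
    rw [Real.sq_sqrt (by positivity)] at this
    simpa [sq_abs, sub_eq_add_neg] using this
  have hc2 : c ^ 2 = θ ^ 2 / (4 * k) := by
    rw [hc, div_pow, mul_pow, Real.sq_sqrt (by positivity : (0:ℝ) ≤ (k:ℝ))]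
    norm_num
  have hfin : (T.card : ℝ) ≤ 4 * ε ^ 2 * k / θ ^ 2 := by
    have h1 : (T.card : ℝ) * (θ ^ 2 / (4 * k)) ≤ ε ^ 2 := by
      rw [← hc2]; exact le_trans hsum hnorm
    have hkpos : (0:ℝ) < k := by exact_mod_cast hk
    have h2 : (T.card : ℝ) * θ ^ 2 ≤ 4 * k * ε ^ 2 := by
      have h3 := mul_le_mul_of_nonneg_right h1 (le_of_lt (by positivity : (0:ℝ) < 4 * k))
      calc (T.card : ℝ) * θ ^ 2 = (T.card : ℝ) * (θ ^ 2 / (4 * k)) * (4 * k) := by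
            field_simp
        _ ≤ ε ^ 2 * (4 * k) := h3
        _ = 4 * k * ε ^ 2 := by ring
    rw [le_div_iff₀ (by positivity)]
    linarith
  rw [hncard]
  exact hfin
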